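/- Let φ(x) = Σ_{n=1}^∞ (-1)^{n+1} exp(-π n² x) for x > 0 and define ϕ(x) = φ(x/4) - φ(x). Then ϕ(x) > 0 for all x > 0. -/
import Mathlib

open Real

/-- `phi x = Σ_{n=1}^∞ (-1)^{n+1} exp (-π n² x)`. -/
noncomputable def phi (x : ℝ) : ℝ :=
  ∑' n : ℕ, (-1 : ℝ) ^ n * Real.exp (-Real.pi * ((n : ℝ) + 1) ^ 2 * x)

/-- Sum over odd integers: `Σ_{k≥0} exp(-π (2k+1)² x)`. -/
noncomputable def Sf (x : ℝ) : ℝ := ∑' k : ℕ, Real.exp (-Real.pi * (2 * (k : ℝ) + 1) ^ 2 * x)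

/-- `Σ_{n≥1} exp(-π n² x)`. -/
noncomputable def Tf (x : ℝ) : ℝ := ∑' n : ℕ, Real.exp (-Real.pi * ((n : ℝ) + 1) ^ 2 * x)

/-- Jacobi theta `Σ_{n ∈ ℤ} exp(-π x n²)`. -/
noncomputable def Th (x : ℝ) : ℝ := ∑' n : ℤ, Real.exp (-Real.pi * x * (n : ℝ) ^ 2)

lemma summable_master {x : ℝ} (hx : 0 < x) {f : ℕ → ℝ} (h0 : ∀ n, 0 ≤ f n)
    (hle : ∀ n : ℕ, f n ≤ Real.exp (-Real.pi * n * x)) : Summable f := by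
  have hgeom : Summable fun n : ℕ => Real.exp (-Real.pi * x) ^ n :=
    summable_geometric_of_lt_one (Real.exp_pos _).le
      (by rw [Real.exp_lt_one_iff]; nlinarith [Real.pi_pos])
  refine Summable.of_nonneg_of_le h0 (fun n => ?_) hgeom
  calc f n ≤ Real.exp (-Real.pi * n * x) := hle n
    _ = Real.exp (-Real.pi * x) ^ n := by
        rw [← Real.exp_nat_mul]; congr 1; ring

lemma summable_sq {x : ℝ} (hx : 0 < x) {g : ℕ → ℝ} (hg : ∀ n : ℕ, (n : ℝ) ≤ g n) :
    Summable fun n : ℕ => Real.exp (-Real.pi * (g n) ^ 2 * x) := by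
  refine summable_master hx (fun n => (Real.exp_pos _).le) (fun n => ?_)
  apply Real.exp_le_exp.mpr
  have h2 : (0 : ℝ) ≤ (n : ℝ) := n.cast_nonneg
  have hn2 : (n : ℝ) ≤ (n : ℝ) ^ 2 := by exact_mod_cast Nat.le_self_pow two_ne_zero n
  have hgg : (n : ℝ) ^ 2 ≤ (g n) ^ 2 := by nlinarith [hg n]
  have h1 : (n : ℝ) ≤ (g n) ^ 2 := le_trans hn2 hgg
  have hprod : 0 ≤ Real.pi * x := (mul_pos Real.pi_pos hx).le
  nlinarith [mul_le_mul_of_nonneg_left h1 hprod]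

lemma summable_Tf {x : ℝ} (hx : 0 < x) :
    Summable fun n : ℕ => Real.exp (-Real.pi * ((n : ℝ) + 1) ^ 2 * x) :=
  summable_sq hx (fun n => by linarith [le_refl (n : ℝ)])

lemma summable_Sf {x : ℝ} (hx : 0 < x) :
    Summable fun k : ℕ => Real.exp (-Real.pi * (2 * (k : ℝ) + 1) ^ 2 * x) :=
  summable_sq hx (fun n => by linarith [n.cast_nonneg (α := ℝ)])

lemma summable_phi {x : ℝ} (hx : 0 < x) :
    Summable fun n : ℕ => (-1 : ℝ) ^ n * Real.exp (-Real.pi * ((n : ℝ) + 1) ^ 2 * x) := by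
  refine Summable.of_abs ?_
  refine (summable_Tf hx).congr fun n => ?_
  rw [abs_mul, abs_pow, abs_neg, abs_one, one_pow, one_mul, abs_of_pos (Real.exp_pos _)]

/-- `E x = Tf (4x)`: the even part. -/
lemma E_eq_Tf {x : ℝ} :
    (∑' k : ℕ, Real.exp (-Real.pi * (2 * (k : ℝ) + 2) ^ 2 * x)) = Tf (4 * x) := by
  unfold Tf
  refine tsum_congr fun k => ?_
  congr 1
  ring

lemma phi_eq {x : ℝ} (hx : 0 < x) : phi x = Sf x - Tf (4 * x) := by
  unfold phi
  have hsum := summable_phi hx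
  have hinj2 : Function.Injective (fun k : ℕ => 2 * k) := fun a b h => by simpa using h
  have hinj2' : Function.Injective (fun k : ℕ => 2 * k + 1) := fun a b h => by simpa using h
  have he : Summable fun k : ℕ =>
      (-1 : ℝ) ^ (2 * k) * Real.exp (-Real.pi * (((2 * k : ℕ) : ℝ) + 1) ^ 2 * x) :=
    hsum.comp_injective hinj2
  have ho : Summable fun k : ℕ =>
      (-1 : ℝ) ^ (2 * k + 1) * Real.exp (-Real.pi * (((2 * k + 1 : ℕ) : ℝ) + 1) ^ 2 * x) :=
    hsum.comp_injective hinj2'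
  rw [← tsum_even_add_odd (f := fun n : ℕ =>
    (-1 : ℝ) ^ n * Real.exp (-Real.pi * ((n : ℝ) + 1) ^ 2 * x)) he ho]
  have h1 : (∑' k : ℕ, (-1 : ℝ) ^ (2 * k) *
      Real.exp (-Real.pi * (((2 * k : ℕ) : ℝ) + 1) ^ 2 * x)) = Sf x := by
    unfold Sf
    refine tsum_congr fun k => ?_
    have hp : ((-1 : ℝ)) ^ (2 * k) = 1 := by
      rw [pow_mul]; norm_num
    rw [hp, one_mul]
    congr 1
    push_cast
    ring
  have h2 : (∑' k : ℕ, (-1 : ℝ) ^ (2 * k + 1) *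
      Real.exp (-Real.pi * (((2 * k + 1 : ℕ) : ℝ) + 1) ^ 2 * x)) = -Tf (4 * x) := by
    rw [← E_eq_Tf (x := x), ← tsum_neg]
    refine tsum_congr fun k => ?_
    have hp : ((-1 : ℝ)) ^ (2 * k + 1) = -1 := by
      rw [pow_succ, pow_mul]; norm_num
    rw [hp, neg_one_mul, neg_inj]
    congr 1
    push_cast
    ring
  rw [h1, h2]
  ring

lemma Tf_split {x : ℝ} (hx : 0 < x) : Tf x = Sf x + Tf (4 * x) := by
  unfold Tf
  have hsum := summable_Tf hx
  have hinj2 : Function.Injective (fun k : ℕ => 2 * k) := fun a b h => by simpa using h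
  have hinj2' : Function.Injective (fun k : ℕ => 2 * k + 1) := fun a b h => by simpa using h
  have he : Summable fun k : ℕ => Real.exp (-Real.pi * (((2 * k : ℕ) : ℝ) + 1) ^ 2 * x) :=
    hsum.comp_injective hinj2
  have ho : Summable fun k : ℕ => Real.exp (-Real.pi * (((2 * k + 1 : ℕ) : ℝ) + 1) ^ 2 * x) :=
    hsum.comp_injective hinj2'
  rw [← tsum_even_add_odd (f := fun n : ℕ =>
    Real.exp (-Real.pi * ((n : ℝ) + 1) ^ 2 * x)) he ho]
  congr 1
  · unfold Sf
    refine tsum_congr fun k => ?_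
    congr 1
    push_cast
    ring
  · refine tsum_congr fun k => ?_
    congr 1
    push_cast
    ring

/-- The key reduction: `φ(x/4) - φ(x) = Sf(x/4) - 2 Sf(x)`. -/
lemma phi_diff_eq {x : ℝ} (hx : 0 < x) : phi (x / 4) - phi x = Sf (x / 4) - 2 * Sf x := by
  have h4 : (0 : ℝ) < x / 4 := by linarith
  rw [phi_eq h4, phi_eq hx]
  rw [show 4 * (x / 4) = x by ring]
  have h2 := Tf_split hx
  linarith

/-- Positivity for `x ≥ 1`: each grouped term is positive. -/
lemma key_pos {x : ℝ} (hx : 1 ≤ x) : 0 < Sf (x / 4) - 2 * Sf x := by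
  have hx0 : (0 : ℝ) < x := by linarith
  have h4 : (0 : ℝ) < x / 4 := by linarith
  have hs1 := summable_Sf h4
  have hs2 := summable_Sf hx0
  unfold Sf
  rw [← tsum_mul_left, ← Summable.tsum_sub hs1 (hs2.mul_left 2)]
  have hterm : ∀ k : ℕ, 0 < Real.exp (-Real.pi * (2 * (k : ℝ) + 1) ^ 2 * (x / 4)) -
      2 * Real.exp (-Real.pi * (2 * (k : ℝ) + 1) ^ 2 * x) := by
    intro k
    set m : ℝ := 2 * (k : ℝ) + 1 with hm
    have hk : (0 : ℝ) ≤ (k : ℝ) := k.cast_nonneg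
    have hm1 : 1 ≤ m := by simp only [hm]; linarith
    have hmx : 1 ≤ m ^ 2 * x := by nlinarith
    have hexp : Real.exp (-Real.pi * m ^ 2 * (x / 4)) =
        Real.exp (-Real.pi * m ^ 2 * x) * Real.exp (3 * Real.pi * m ^ 2 * x / 4) := by
      rw [← Real.exp_add]; congr 1; ring
    have hkey : (3 : ℝ) * 1 ≤ Real.pi * (m ^ 2 * x) :=
      mul_le_mul Real.pi_gt_three.le hmx zero_le_one Real.pi_pos.le
    have h2lt : (2 : ℝ) < Real.exp (3 * Real.pi * m ^ 2 * x / 4) := by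
      have h := Real.add_one_le_exp (3 * Real.pi * m ^ 2 * x / 4)
      nlinarith
    have hpos := Real.exp_pos (-Real.pi * m ^ 2 * x)
    nlinarith
  exact Summable.tsum_pos (hs1.sub (hs2.mul_left 2)) (fun k => (hterm k).le) 0 (hterm 0)

lemma summable_Th_nat {x : ℝ} (hx : 0 < x) :
    Summable fun n : ℕ => Real.exp (-Real.pi * x * ((n : ℤ) : ℝ) ^ 2) := by
  refine (summable_sq hx (g := fun n : ℕ => (n : ℝ)) (fun n => le_refl _)).congr fun n => ?_
  congr 1
  push_cast
  ring

lemma Th_eq {x : ℝ} (hx : 0 < x) : Th x = 1 + 2 * Tf x := by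
  unfold Th
  have hnat := summable_Th_nat hx
  have hneg : Summable fun n : ℕ => Real.exp (-Real.pi * x * ((-((n : ℤ) + 1) : ℤ) : ℝ) ^ 2) := by
    refine (summable_sq hx (g := fun n : ℕ => (n : ℝ) + 1)
      (fun n => by simp)).congr fun n => ?_
    congr 1
    push_cast
    ring
  rw [tsum_of_nat_of_neg_add_one
    (f := fun n : ℤ => Real.exp (-Real.pi * x * (n : ℝ) ^ 2)) hnat hneg]
  have h1 : (∑' n : ℕ, Real.exp (-Real.pi * x * ((n : ℤ) : ℝ) ^ 2)) = 1 + Tf x := by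
    rw [Summable.tsum_eq_zero_add hnat]
    congr 1
    · norm_num
    · unfold Tf
      refine tsum_congr fun n => ?_
      congr 1
      push_cast
      ring
  have h2 : (∑' n : ℕ, Real.exp (-Real.pi * x * ((-((n : ℤ) + 1) : ℤ) : ℝ) ^ 2)) = Tf x := by
    unfold Tf
    refine tsum_congr fun n => ?_
    congr 1
    push_cast
    ring
  rw [h1, h2]
  ring

/-- Modular transformation for the theta function. -/
lemma Th_inv {x : ℝ} (hx : 0 < x) : Th (1 / x) = Real.sqrt x * Th x := by
  have key := Real.tsum_exp_neg_mul_int_sq hx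
  have h1 : Th x = 1 / x ^ ((1 : ℝ) / 2) * Th (1 / x) := by
    unfold Th
    rw [key]
    congr 1
    refine tsum_congr fun n => ?_
    congr 1
    ring
  have hx2 : x ^ ((1 : ℝ) / 2) = Real.sqrt x := (Real.sqrt_eq_rpow x).symm
  have hxs : (0 : ℝ) < Real.sqrt x := Real.sqrt_pos.mpr hx
  rw [hx2] at h1
  field_simp at h1
  linarith [h1]

lemma two_Sf {x : ℝ} (hx : 0 < x) : 2 * Sf x = Th x - Th (4 * x) := by
  have h4 : (0 : ℝ) < 4 * x := by linarith
  rw [Th_eq hx, Th_eq h4]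
  have := Tf_split hx
  linarith

lemma sqrt4mul {x : ℝ} (hx : 0 < x) : Real.sqrt (4 * x) = 2 * Real.sqrt x := by
  rw [show (4 : ℝ) * x = 2 ^ 2 * x by ring, Real.sqrt_mul (by positivity),
    Real.sqrt_sq (by norm_num : (0 : ℝ) ≤ 2)]

/-- Modular relation for the difference. -/
lemma D_modular {x : ℝ} (hx : 0 < x) :
    Sf ((1 / x) / 4) - 2 * Sf (1 / x) = Real.sqrt x * (Sf (x / 4) - 2 * Sf x) := by
  have hx4 : (0 : ℝ) < x / 4 := by linarith
  have h4x : (0 : ℝ) < 4 * x := by linarith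
  have hix : (0 : ℝ) < 1 / x := by positivity
  have hix4 : (0 : ℝ) < 1 / (4 * x) := by positivity
  rw [show (1 : ℝ) / x / 4 = 1 / (4 * x) by ring]
  have e1 : 2 * Sf (1 / (4 * x)) = Th (1 / (4 * x)) - Th (1 / x) := by
    have h := two_Sf hix4
    rw [show (4 : ℝ) * (1 / (4 * x)) = 1 / x by field_simp] at h
    linarith
  have e2 : 2 * Sf (1 / x) = Th (1 / x) - Th (1 / (x / 4)) := by
    have h := two_Sf hix
    rw [show (4 : ℝ) * (1 / x) = 1 / (x / 4) by field_simp] at h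
    linarith
  have e3 : 2 * Sf (x / 4) = Th (x / 4) - Th x := by
    have h := two_Sf hx4
    rw [show (4 : ℝ) * (x / 4) = x by ring] at h
    linarith
  have e4 : 2 * Sf x = Th x - Th (4 * x) := two_Sf hx
  have m1 : Th (1 / (4 * x)) = 2 * Real.sqrt x * Th (4 * x) := by
    rw [Th_inv h4x, sqrt4mul hx]
  have m2 : Th (1 / x) = Real.sqrt x * Th x := Th_inv hx
  have m3 : Th (1 / (x / 4)) = (Real.sqrt x / 2) * Th (x / 4) := by
    have h4 : Real.sqrt 4 = 2 := by
      rw [show (4 : ℝ) = 2 ^ 2 by norm_num]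
      exact Real.sqrt_sq (by norm_num)
    have hs : Real.sqrt (x / 4) = Real.sqrt x / 2 := by
      rw [Real.sqrt_div hx.le, h4]
    rw [Th_inv hx4, hs]
  have e3' : Real.sqrt x * (2 * Sf (x / 4)) = Real.sqrt x * (Th (x / 4) - Th x) := by rw [e3]
  have e4' : Real.sqrt x * (2 * Sf x) = Real.sqrt x * (Th x - Th (4 * x)) := by rw [e4]
  have expand3 : Real.sqrt x * (2 * Sf (x / 4)) = 2 * (Real.sqrt x * Sf (x / 4)) := by ring
  have expand4 : Real.sqrt x * (2 * Sf x) = 2 * (Real.sqrt x * Sf x) := by ring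
  nlinarith [e1, e2, e3', e4', m1, m2, m3, expand3, expand4]

theorem varphi_pos (x : ℝ) (hx : 0 < x) : 0 < phi (x / 4) - phi x := by
  rw [phi_diff_eq hx]
  rcases le_or_gt 1 x with h | h
  · exact key_pos h
  · have hy : (1 : ℝ) ≤ 1 / x := by
      rw [le_div_iff₀ hx]; linarith
    have hy0 : (0 : ℝ) < 1 / x := by positivity
    have hmod := D_modular hy0
    rw [one_div_one_div] at hmod
    have hpos := key_pos hy
    have hsq : (0 : ℝ) < Real.sqrt (1 / x) := Real.sqrt_pos.mpr hy0
    nlinarith [hmod, hpos, hsq]
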